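/- arXiv:2412.10901 — 2 statements merged into one kernel-verified Lean document; each statement's English description precedes it below -/
import Mathlib

section
/- Let Γ = (V,E) be a directed strongly regular graph with parameters (v,k,t,λ,μ), let G be a group of automorphisms of Γ with vertex orbits O_1, …, O_b of sizes n_1, …, n_b, and for each i,j let r_{ij} = |{y ∈ O_j : (x,y) ∈ E}| for any (equivalently, every) x ∈ O_i. Then for all i,j, the entries of the row orbit matrix R = [r_{ij}] satisfy δ_{ij}(t−μ) + μ·n_j + (λ−μ)·r_{ij} = Σ_{z=1}^{b} r_{iz}·r_{zj}, where δ_{ij} is the Kronecker delta. -/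
open Matrix BigOperators

def adjM {V : Type} [Fintype V] (E : V → V → Bool) : Matrix V V ℤ :=
  Matrix.of fun x y => if E x y then 1 else 0

def IsDSRG {V : Type} [Fintype V] [DecidableEq V] (E : V → V → Bool)
    (v k t l m : ℕ) : Prop :=
  Fintype.card V = v ∧ (∀ x, E x x = false) ∧
  adjM E * adjM E + ((m : ℤ) - (l : ℤ)) • adjM E - ((t : ℤ) - (m : ℤ)) • (1 : Matrix V V ℤ)
    = (m : ℤ) • Matrix.of (fun _ _ => (1 : ℤ)) ∧
  adjM E * Matrix.of (fun _ _ => (1 : ℤ)) = (k : ℤ) • Matrix.of (fun _ _ => (1 : ℤ)) ∧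
  Matrix.of (fun _ _ => (1 : ℤ)) * adjM E = (k : ℤ) • Matrix.of (fun _ _ => (1 : ℤ))

def IsAut {V : Type} (E : V → V → Bool) (σ : Equiv.Perm V) : Prop :=
  ∀ x y, E (σ x) (σ y) = E x y

def autGroup {V : Type} (E : V → V → Bool) : Subgroup (Equiv.Perm V) where
  carrier := {σ | ∀ x y, E (σ x) (σ y) = E x y}
  one_mem' := fun _ _ => rfl
  mul_mem' := by
    intro a b ha hb x y
    simp only [Equiv.Perm.coe_mul, Function.comp_apply]
    rw [ha, hb]
  inv_mem' := by
    intro a ha x y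
    have := ha (a⁻¹ x) (a⁻¹ y)
    simpa [Equiv.apply_symm_apply] using this.symm

def Iso {V W : Type} (E : V → V → Bool) (F : W → W → Bool) : Prop :=
  ∃ φ : V ≃ W, ∀ x y, F (φ x) (φ y) = E x y

/-- the entries of the row orbit matrix `R = [r i j]` of a DSRG with
respect to an automorphism group `G` with orbits `orbit G (rep 1), …, orbit G (rep b)`
satisfy `δ_{ij}(t−μ) + μ·n_j + (λ−μ)·r_{ij} = Σ_z r_{iz}·r_{zj}`. -/
theorem rowOrbitMatrix_equation {V : Type} [Fintype V] [DecidableEq V]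
    (E : V → V → Bool) (v k t l m : ℕ) (hG : IsDSRG E v k t l m)
    (G : Subgroup (Equiv.Perm V)) (hAut : ∀ σ ∈ G, IsAut E σ)
    (b : ℕ) (rep : Fin b → V)
    (hcover : ∀ x : V, ∃ i, x ∈ MulAction.orbit G (rep i))
    (hdistinct : ∀ i j : Fin b,
      MulAction.orbit G (rep i) = MulAction.orbit G (rep j) → i = j)
    (r : Fin b → Fin b → ℕ)
    (hr : ∀ i j : Fin b, ∀ x ∈ MulAction.orbit G (rep i),
        Set.ncard {y ∈ MulAction.orbit G (rep j) | E x y = true} = r i j)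
    (i j : Fin b) :
    (if i = j then ((t : ℤ) - (m : ℤ)) else 0)
      + (m : ℤ) * (Set.ncard (MulAction.orbit G (rep j)) : ℤ)
      + ((l : ℤ) - (m : ℤ)) * (r i j : ℤ)
      = ∑ z : Fin b, (r i z : ℤ) * (r z j : ℤ) := by
  classical
  obtain ⟨-, -, heq, -, -⟩ := hG
  set A := adjM E with hA
  set S : Fin b → Finset V := fun z => (MulAction.orbit G (rep z)).toFinset with hS
  have memS : ∀ z x, x ∈ S z ↔ x ∈ MulAction.orbit G (rep z) := fun z x => Set.mem_toFinset
  choose o ho using hcover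
  have ho' : ∀ z w, w ∈ S z ↔ o w = z := by
    intro z w
    rw [memS]
    constructor
    · intro hw
      have h1 : MulAction.orbit G w = MulAction.orbit G (rep z) :=
        MulAction.orbit_eq_iff.mpr hw
      have h2 : MulAction.orbit G w = MulAction.orbit G (rep (o w)) :=
        MulAction.orbit_eq_iff.mpr (ho w)
      exact hdistinct _ _ (h2.symm.trans h1)
    · intro hw; rw [← hw]; exact ho w
  -- sum form of hr
  have hr' : ∀ (z j' : Fin b) (x : V), x ∈ MulAction.orbit G (rep z) →
      ∑ y ∈ S j', A x y = (r z j' : ℤ) := by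
    intro z j' x hx
    have h1 := hr z j' x hx
    have hset : {y ∈ MulAction.orbit G (rep j') | E x y = true}
        = ↑((S j').filter fun y => E x y) := by
      ext y; simp [memS, Set.mem_setOf_eq, and_comm]
    rw [hset, Set.ncard_coe_finset] at h1
    have : ∑ y ∈ S j', A x y = ∑ y ∈ S j', (if E x y then (1:ℤ) else 0) := rfl
    rw [this, Finset.sum_boole, h1]
  have hxi : rep i ∈ MulAction.orbit G (rep i) := MulAction.mem_orbit_self _
  have hentry : ∀ x y : V, (A * A) x y
      = (m:ℤ) - ((m:ℤ)-(l:ℤ)) * A x y + ((t:ℤ)-(m:ℤ)) * (if x = y then 1 else 0) := by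
    intro x y
    have h := congrFun (congrFun heq x) y
    simp only [Matrix.add_apply, Matrix.sub_apply, Matrix.smul_apply, Matrix.one_apply,
      Matrix.of_apply, smul_eq_mul] at h
    by_cases hxy : x = y <;> simp [hxy] at h ⊢ <;> linarith
  have hn : ((S j).card : ℤ) = (Set.ncard (MulAction.orbit G (rep j)) : ℤ) := by
    rw [Set.ncard_eq_toFinset_card']
  have hmem : rep i ∈ S j ↔ i = j := by
    rw [ho']
    have : o (rep i) = i := (ho' i (rep i)).mp ((memS i (rep i)).mpr hxi)
    rw [this]
  -- LHS computation
  have hL : ∑ y ∈ S j, (A * A) (rep i) y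
      = (if i = j then ((t:ℤ)-(m:ℤ)) else 0) + (m:ℤ) * ((S j).card : ℤ)
        + ((l:ℤ)-(m:ℤ)) * (r i j : ℤ) := by
    simp only [hentry]
    rw [Finset.sum_add_distrib, Finset.sum_sub_distrib, Finset.sum_const,
      ← Finset.mul_sum, ← Finset.mul_sum, hr' i j _ hxi]
    have hδ : ∑ y ∈ S j, (if rep i = y then (1:ℤ) else 0)
        = (if i = j then (1:ℤ) else 0) := by
      rw [Finset.sum_ite_eq]
      by_cases hij : i = j
      · subst hij
        have : rep i ∈ S i := (memS _ _).mpr (MulAction.mem_orbit_self _)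
        simp [this]
      · simp [hij, hmem]
    rw [hδ]
    by_cases hij : i = j <;> simp [hij] <;> ring
  -- RHS computation
  have hR : ∑ y ∈ S j, (A * A) (rep i) y = ∑ z : Fin b, (r i z : ℤ) * (r z j : ℤ) := by
    calc ∑ y ∈ S j, (A * A) (rep i) y
        = ∑ y ∈ S j, ∑ w : V, A (rep i) w * A w y := by
          simp [Matrix.mul_apply]
      _ = ∑ w : V, ∑ y ∈ S j, A (rep i) w * A w y := Finset.sum_comm
      _ = ∑ w : V, A (rep i) w * (r (o w) j : ℤ) := by
          refine Finset.sum_congr rfl fun w _ => ?_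
          rw [← Finset.mul_sum, hr' (o w) j w (ho w)]
      _ = ∑ z : Fin b, ∑ w ∈ Finset.univ.filter (fun w => o w = z),
            A (rep i) w * (r (o w) j : ℤ) := (Finset.sum_fiberwise _ _ _).symm
      _ = ∑ z : Fin b, (r i z : ℤ) * (r z j : ℤ) := by
          refine Finset.sum_congr rfl fun z _ => ?_
          have hfz : Finset.univ.filter (fun w => o w = z) = S z := by
            ext w; simp [ho']
          rw [hfz]
          have : ∑ w ∈ S z, A (rep i) w * (r (o w) j : ℤ)
              = ∑ w ∈ S z, A (rep i) w * (r z j : ℤ) := by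
            refine Finset.sum_congr rfl fun w hw => ?_
            rw [(ho' z w).mp hw]
          rw [this, ← Finset.sum_mul, hr' i z _ hxi]
  rw [← hn, ← hL, hR]
end

section
/- No directed strongly regular graph with parameters (22,9,6,3,4) admits an automorphism of order 7. -/
open Matrix BigOperators

/-- If `σ` has order 7 and `x` is not fixed by `σ`, then any power fixing `x`
has exponent divisible by 7. -/
lemma orbit_period {V : Type} (σ : Equiv.Perm V) (h7 : orderOf σ = 7) {x : V} (hx : σ x ≠ x)
    {k : ℕ} (hk : (σ ^ k) x = x) : 7 ∣ k := by
  have h1 : Function.IsPeriodicPt σ 7 x := by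
    show (⇑σ)^[7] x = x
    rw [Equiv.Perm.iterate_eq_pow, ← h7, pow_orderOf_eq_one]; rfl
  have h2 : Function.IsPeriodicPt σ k x := by
    show (⇑σ)^[k] x = x
    rw [Equiv.Perm.iterate_eq_pow]; exact hk
  have hd : Function.minimalPeriod σ x ∣ 7 := h1.minimalPeriod_dvd
  rcases (Nat.Prime.eq_one_or_self_of_dvd (by norm_num : Nat.Prime 7) _ hd) with h | h
  · exfalso
    have : Function.IsPeriodicPt σ 1 x :=
      Function.isPeriodicPt_iff_minimalPeriod_dvd.mpr (by rw [h])
    exact hx this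
  · rw [← h]; exact h2.minimalPeriod_dvd

/-- A σ-invariant set with no fixed points has cardinality divisible by 7, when σ has
order 7. -/
lemma seven_dvd_card {V : Type} [Fintype V] [DecidableEq V] (σ : Equiv.Perm V)
    (h7 : orderOf σ = 7) :
    ∀ S : Finset V, (∀ z ∈ S, σ z ∈ S) → (∀ z ∈ S, σ z ≠ z) → 7 ∣ S.card := by
  intro S
  induction S using Finset.strongInduction with
  | _ S ih =>
    intro hinv hfpf
    rcases S.eq_empty_or_nonempty with rfl | ⟨x, hx⟩
    · simp
    · have hpow7 : σ ^ 7 = 1 := by rw [← h7]; exact pow_orderOf_eq_one σ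
      set O : Finset V := (Finset.range 7).image (fun i => (σ ^ i) x) with hO
      have hxS : ∀ i, (σ ^ i) x ∈ S := by
        intro i
        induction i with
        | zero => simpa using hx
        | succ n ihn =>
          rw [pow_succ']
          exact hinv _ ihn
      have hmodmem : ∀ m : ℕ, (σ ^ m) x ∈ O := by
        intro m
        have hme : (σ ^ m) x = (σ ^ (m % 7)) x := by
          conv_lhs => rw [← Nat.div_add_mod m 7]
          rw [pow_add, pow_mul, hpow7, one_pow, one_mul]
        rw [hme]
        exact Finset.mem_image.mpr ⟨m % 7, Finset.mem_range.mpr (Nat.mod_lt _ (by norm_num)), rfl⟩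
      have hOsub : O ⊆ S := by
        intro z hz
        obtain ⟨i, _, rfl⟩ := Finset.mem_image.mp hz
        exact hxS i
      have hcardO : O.card = 7 := by
        rw [hO, Finset.card_image_of_injOn, Finset.card_range]
        have key : ∀ i j : ℕ, i ≤ j → j < 7 → (σ ^ i) x = (σ ^ j) x → i = j := by
          intro i j hij hj7 h
          obtain ⟨d, rfl⟩ := Nat.exists_eq_add_of_le hij
          have h2 : (σ ^ i) ((σ ^ d) x) = (σ ^ i) x := by
            rw [← Equiv.Perm.mul_apply, ← pow_add]; exact h.symm
          have hd : (σ ^ d) x = x := (σ ^ i).injective h2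
          have := orbit_period σ h7 (hfpf x hx) hd
          rcases Nat.eq_zero_or_pos d with rfl | hdp
          · simp
          · have := Nat.le_of_dvd hdp this; omega
        intro i hi j hj hij
        simp only [Finset.coe_range, Set.mem_Iio] at hi hj
        rcases le_total i j with h | h
        · exact key i j h hj hij
        · exact (key j i h hi hij.symm).symm
      have hOinv' : ∀ z, σ z ∈ O → z ∈ O := by
        intro z hz
        obtain ⟨i, _, hi⟩ := Finset.mem_image.mp hz
        have : z = (σ ^ (6 + i)) x := by
          have h1 : σ⁻¹ (σ z) = σ⁻¹ ((σ ^ i) x) := by rw [hi]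
          rw [← Equiv.Perm.mul_apply, inv_mul_cancel, Equiv.Perm.one_apply] at h1
          rw [h1, ← Equiv.Perm.mul_apply]
          congr 1
          have h2 : σ⁻¹ = σ ^ 6 := by
            rw [inv_eq_iff_mul_eq_one, ← pow_succ']
            exact hpow7
          rw [h2, ← pow_add]
        rw [this]; exact hmodmem _
      have hssub : S \ O ⊂ S := by
        apply Finset.ssubset_iff_of_subset (Finset.sdiff_subset) |>.mpr
        have hxO : x ∈ O := by simpa using hmodmem 0
        exact ⟨x, hx, by simp [Finset.mem_sdiff, hx, hxO]⟩
      have hdvd := ih (S \ O) hssub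
        (fun z hz => by
          rcases Finset.mem_sdiff.mp hz with ⟨hz1, hz2⟩
          exact Finset.mem_sdiff.mpr ⟨hinv z hz1, fun hc => hz2 (hOinv' z hc)⟩)
        (fun z hz => hfpf z (Finset.mem_sdiff.mp hz).1)
      have hcard : S.card = (S \ O).card + 7 := by
        rw [Finset.card_sdiff_of_subset hOsub, hcardO]
        have := Finset.card_le_card hOsub
        omega
      omega

/-- no DSRG(22,9,6,3,4) admits an automorphism of order 7. -/
theorem no_automorphism_of_order_7 {V : Type} [Fintype V] [DecidableEq V]
    (E : V → V → Bool) (hG : IsDSRG E 22 9 6 3 4)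
    (σ : Equiv.Perm V) (hσ : IsAut E σ) :
    orderOf σ ≠ 7 := by
  intro h7
  obtain ⟨hcard, hloop, heq, hAJ, hJA⟩ := hG
  -- every vertex has out-degree 9
  have houtdeg : ∀ x : V, (Finset.univ.filter (fun z => E x z = true)).card = 9 := by
    intro x
    have h := congrFun (congrFun hAJ x) x
    simp only [Matrix.mul_apply, adjM, Matrix.smul_apply, Matrix.of_apply, smul_eq_mul,
      mul_one] at h
    rw [Finset.sum_boole] at h
    exact_mod_cast h
  -- every vertex has in-degree 9
  have hindeg : ∀ x : V, (Finset.univ.filter (fun w => E w x = true)).card = 9 := by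
    intro x
    have h := congrFun (congrFun hJA x) x
    simp only [Matrix.mul_apply, adjM, Matrix.smul_apply, Matrix.of_apply, smul_eq_mul,
      one_mul] at h
    rw [Finset.sum_boole] at h
    exact_mod_cast h
  -- every vertex has exactly 6 reciprocal neighbours
  have hrecip : ∀ x : V, (Finset.univ.filter (fun z => E x z = true ∧ E z x = true)).card = 6 := by
    intro x
    have h := congrFun (congrFun heq x) x
    simp only [Matrix.sub_apply, Matrix.add_apply, Matrix.mul_apply, Matrix.smul_apply,
      Matrix.one_apply_eq, Matrix.of_apply, smul_eq_mul, adjM, hloop x] at h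
    norm_num at h
    have hterm : ∀ z, (if E z x = true then (if E x z = true then (1:ℤ) else 0) else 0)
        = if (E x z = true ∧ E z x = true) then 1 else 0 := by
      intro z
      by_cases h1 : E x z <;> by_cases h2 : E z x <;> simp [h1, h2]
    rw [Finset.sum_congr rfl (fun z _ => hterm z), Finset.sum_boole] at h
    have h6 : ((Finset.univ.filter (fun z => E x z = true ∧ E z x = true)).card : ℤ) = 6 := by
      linarith
    exact_mod_cast h6
  set F := Finset.univ.filter (fun z : V => σ z = z) with hF
  set M := Finset.univ.filter (fun z : V => ¬ σ z = z) with hM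
  have hFM : F.card + M.card = 22 := by
    rw [hF, hM, Finset.card_filter_add_card_filter_not, Finset.card_univ, hcard]
  have hMdvd : 7 ∣ M.card := by
    apply seven_dvd_card σ h7
    · intro z hz
      simp only [hM, Finset.mem_filter, Finset.mem_univ, true_and] at hz ⊢
      intro hc
      exact hz (σ.injective hc)
    · intro z hz
      simpa [hM] using (Finset.mem_filter.mp hz).2
  have hMne : M.Nonempty := by
    by_contra hc
    rw [Finset.not_nonempty_iff_eq_empty] at hc
    have hid : σ = 1 := by
      ext z
      simp only [Equiv.Perm.coe_one, id_eq]
      by_contra hz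
      have hzM : z ∈ M := by simp [hM, hz]
      rw [hc] at hzM
      simp at hzM
    rw [hid, orderOf_one] at h7
    norm_num at h7
  have hM7 : 7 ≤ M.card := Nat.le_of_dvd (Finset.card_pos.mpr hMne) hMdvd
  have hFne : F.Nonempty := by
    rcases Finset.eq_empty_or_nonempty F with h | h
    · exfalso
      rw [h] at hFM
      simp only [Finset.card_empty, zero_add] at hFM
      rw [hFM] at hMdvd
      norm_num at hMdvd
    · exact h
  -- key: all out- and in-neighbours of a fixed vertex are fixed
  have key : ∀ x : V, σ x = x →
      (∀ z, E x z = true → σ z = z) ∧ (∀ z, E z x = true → σ z = z) := by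
    intro x hx
    -- reciprocal neighbours of x are fixed
    have hRfix : ∀ z, E x z = true ∧ E z x = true → σ z = z := by
      by_contra hc
      push_neg at hc
      obtain ⟨z, hz1, hz2⟩ := hc
      set Rm := Finset.univ.filter
        (fun w => (E x w = true ∧ E w x = true) ∧ ¬ σ w = w) with hRm
      have hdvd : 7 ∣ Rm.card := by
        apply seven_dvd_card σ h7
        · intro w hw
          simp only [hRm, Finset.mem_filter, Finset.mem_univ, true_and] at hw ⊢
          obtain ⟨⟨hw1, hw2⟩, hw3⟩ := hw
          refine ⟨⟨?_, ?_⟩, ?_⟩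
          · have h1 := hσ x w
            rw [hx] at h1
            rw [h1]; exact hw1
          · have h1 := hσ w x
            rw [hx] at h1
            rw [h1]; exact hw2
          · intro hcc
            exact hw3 (σ.injective hcc)
        · intro w hw
          simpa [hRm] using (Finset.mem_filter.mp hw).2.2
      have hsub : Rm ⊆ Finset.univ.filter (fun w => E x w = true ∧ E w x = true) := by
        intro w hw
        simp only [hRm, Finset.mem_filter, Finset.mem_univ, true_and] at hw ⊢
        exact hw.1
      have hle := Finset.card_le_card hsub
      rw [hrecip x] at hle
      have hzero : Rm.card = 0 := by omega
      have hzRm : z ∈ Rm := by simp [hRm, hz1.1, hz1.2, hz2]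
      rw [Finset.card_eq_zero] at hzero
      rw [hzero] at hzRm
      simp at hzRm
    constructor
    · -- out-neighbours fixed
      intro z hz
      by_contra hzf
      set Np := Finset.univ.filter (fun w => E x w = true ∧ ¬ σ w = w) with hNp
      have hdvd : 7 ∣ Np.card := by
        apply seven_dvd_card σ h7
        · intro w hw
          simp only [hNp, Finset.mem_filter, Finset.mem_univ, true_and] at hw ⊢
          obtain ⟨hw1, hw2⟩ := hw
          refine ⟨?_, ?_⟩
          · have h1 := hσ x w
            rw [hx] at h1
            rw [h1]; exact hw1
          · intro hcc
            exact hw2 (σ.injective hcc)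
        · intro w hw
          simpa [hNp] using (Finset.mem_filter.mp hw).2.2
      have hzNp : z ∈ Np := by simp [hNp, hz, hzf]
      have hNp7 : 7 ≤ Np.card := Nat.le_of_dvd (Finset.card_pos.mpr ⟨z, hzNp⟩) hdvd
      have hsplit : (Finset.univ.filter (fun w => E x w = true ∧ σ w = w)).card
          + Np.card = 9 := by
        rw [hNp, ← houtdeg x, ← Finset.filter_filter, ← Finset.filter_filter]
        exact Finset.card_filter_add_card_filter_not (fun w => σ w = w)
      have h6 : 6 ≤ (Finset.univ.filter (fun w => E x w = true ∧ σ w = w)).card := by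
        rw [← hrecip x]
        apply Finset.card_le_card
        intro w hw
        simp only [Finset.mem_filter, Finset.mem_univ, true_and] at hw ⊢
        exact ⟨hw.1, hRfix w hw⟩
      omega
    · -- in-neighbours fixed
      intro z hz
      by_contra hzf
      set Nm := Finset.univ.filter (fun w => E w x = true ∧ ¬ σ w = w) with hNm
      have hdvd : 7 ∣ Nm.card := by
        apply seven_dvd_card σ h7
        · intro w hw
          simp only [hNm, Finset.mem_filter, Finset.mem_univ, true_and] at hw ⊢
          obtain ⟨hw1, hw2⟩ := hw
          refine ⟨?_, ?_⟩
          · have h1 := hσ w x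
            rw [hx] at h1
            rw [h1]; exact hw1
          · intro hcc
            exact hw2 (σ.injective hcc)
        · intro w hw
          simpa [hNm] using (Finset.mem_filter.mp hw).2.2
      have hzNm : z ∈ Nm := by simp [hNm, hz, hzf]
      have hNm7 : 7 ≤ Nm.card := Nat.le_of_dvd (Finset.card_pos.mpr ⟨z, hzNm⟩) hdvd
      have hsplit : (Finset.univ.filter (fun w => E w x = true ∧ σ w = w)).card
          + Nm.card = 9 := by
        rw [hNm, ← hindeg x, ← Finset.filter_filter, ← Finset.filter_filter]
        exact Finset.card_filter_add_card_filter_not (fun w => σ w = w)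
      have h6 : 6 ≤ (Finset.univ.filter (fun w => E w x = true ∧ σ w = w)).card := by
        rw [← hrecip x]
        apply Finset.card_le_card
        intro w hw
        simp only [Finset.mem_filter, Finset.mem_univ, true_and] at hw ⊢
        exact ⟨hw.2, hRfix w hw⟩
      omega
  -- a fixed vertex has all 9 out-neighbours fixed and distinct from itself
  have hF10 : 10 ≤ F.card := by
    obtain ⟨x, hxF⟩ := hFne
    have hx : σ x = x := by simpa [hF] using hxF
    have hsub : Finset.univ.filter (fun z => E x z = true) ⊆ F.erase x := by
      intro z hz
      simp only [Finset.mem_filter, Finset.mem_univ, true_and] at hz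
      refine Finset.mem_erase.mpr ⟨?_, ?_⟩
      · rintro rfl
        simp [hloop] at hz
      · simp [hF, (key x hx).1 z hz]
    have hle := Finset.card_le_card hsub
    rw [houtdeg x, Finset.card_erase_of_mem hxF] at hle
    omega
  have hM7' : M.card = 7 := by omega
  obtain ⟨y, hyM⟩ := hMne
  have hy : ¬ σ y = y := by simpa [hM] using hyM
  have hsub : Finset.univ.filter (fun z => E y z = true) ⊆ M.erase y := by
    intro z hz
    simp only [Finset.mem_filter, Finset.mem_univ, true_and] at hz
    refine Finset.mem_erase.mpr ⟨?_, ?_⟩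
    · rintro rfl
      simp [hloop] at hz
    · simp only [hM, Finset.mem_filter, Finset.mem_univ, true_and]
      intro hzfix
      exact hy ((key z hzfix).2 y hz)
  have hle := Finset.card_le_card hsub
  rw [houtdeg y, Finset.card_erase_of_mem hyM, hM7'] at hle
  omega
end
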